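/- The one-dimensional stationary slow-diffusion density integrates to one: e^{-a} + ∫_{-ρ}^{ρ} (a e^{-a}/(2ρ))[I₀((a/ρ)√(ρ²−x²)) + (ρ/√(ρ²−x²)) I₁((a/ρ)√(ρ²−x²))] dx = 1, for all a>0 and ρ>0. -/

import Mathlib

open Real Filter MeasureTheory

noncomputable def besselI0 (z : ℝ) : ℝ := ∑' k : ℕ, (z / 2) ^ (2 * k) / ((k.factorial : ℝ)) ^ 2

noncomputable def besselI1 (z : ℝ) : ℝ :=
  ∑' k : ℕ, (z / 2) ^ (2 * k + 1) / ((k.factorial : ℝ) * ((k + 1).factorial : ℝ))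

lemma real_exp_eq_tsum (x : ℝ) : Real.exp x = ∑' n : ℕ, x ^ n / (n.factorial : ℝ) := by
  rw [Real.exp_eq_exp_ℝ, NormedSpace.exp_eq_tsum_div]

lemma summable_sq_fact (u : ℝ) (hu : 0 ≤ u) :
    Summable (fun k : ℕ => u ^ k / ((k.factorial : ℝ)) ^ 2) := by
  apply Summable.of_nonneg_of_le (fun k => by positivity) (fun k => ?_)
    (Real.summable_pow_div_factorial u)
  have h1 : (1:ℝ) ≤ (k.factorial : ℝ) := by exact_mod_cast Nat.one_le_iff_ne_zero.mpr k.factorial_ne_zero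
  have h2 : (0:ℝ) < (k.factorial : ℝ) := by positivity
  apply div_le_div_of_nonneg_left (by positivity) h2
  nlinarith

lemma summable_fact_fact (u : ℝ) (hu : 0 ≤ u) :
    Summable (fun k : ℕ => u ^ k / ((k.factorial : ℝ) * ((k+1).factorial : ℝ))) := by
  apply Summable.of_nonneg_of_le (fun k => by positivity) (fun k => ?_)
    (Real.summable_pow_div_factorial u)
  have h1 : (1:ℝ) ≤ ((k+1).factorial : ℝ) := by exact_mod_cast Nat.one_le_iff_ne_zero.mpr (k+1).factorial_ne_zero
  have h2 : (0:ℝ) < (k.factorial : ℝ) := by positivity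
  apply div_le_div_of_nonneg_left (by positivity) h2
  nlinarith

lemma pointwise_eq (a ρ x : ℝ) (ha : 0 < a) (hρ : 0 < ρ) (hx : x ∈ Set.Ioo (-ρ) ρ) :
    (a * Real.exp (-a) / (2 * ρ)) *
      (besselI0 ((a / ρ) * Real.sqrt (ρ ^ 2 - x ^ 2)) +
        (ρ / Real.sqrt (ρ ^ 2 - x ^ 2)) * besselI1 ((a / ρ) * Real.sqrt (ρ ^ 2 - x ^ 2)))
    = ∑' k : ℕ, (a * Real.exp (-a) / (2 * ρ)) *
        ( ((a/(2*ρ))^2 * (ρ^2 - x^2))^k / ((k.factorial:ℝ))^2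
          + (a/2) * ((a/(2*ρ))^2 * (ρ^2 - x^2))^k / ((k.factorial:ℝ) * ((k+1).factorial:ℝ)) ) := by
  obtain ⟨hx1, hx2⟩ := hx
  have hs : 0 < ρ^2 - x^2 := by nlinarith
  set s : ℝ := ρ^2 - x^2 with hs_def
  have hsq : Real.sqrt s ^ 2 = s := Real.sq_sqrt hs.le
  have hsqpos : 0 < Real.sqrt s := Real.sqrt_pos.mpr hs
  set B : ℝ := (a/(2*ρ))^2 with hB_def
  have hBs : 0 ≤ B * s := by positivity
  have hz2 : (a / ρ) * Real.sqrt s / 2 = (a/(2*ρ)) * Real.sqrt s := by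
    field_simp
  have hzpow : ∀ k : ℕ, ((a / ρ) * Real.sqrt s / 2) ^ (2*k) = (B * s)^k := by
    intro k
    rw [hz2, pow_mul, mul_pow, hsq]
  have h0 : besselI0 ((a / ρ) * Real.sqrt s) = ∑' k : ℕ, (B*s)^k / ((k.factorial:ℝ))^2 := by
    rw [besselI0]
    exact tsum_congr fun k => by rw [hzpow k]
  have h1 : (ρ / Real.sqrt s) * besselI1 ((a / ρ) * Real.sqrt s)
      = ∑' k : ℕ, (a/2) * (B*s)^k / ((k.factorial:ℝ) * ((k+1).factorial:ℝ)) := by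
    rw [besselI1, ← tsum_mul_left]
    refine tsum_congr fun k => ?_
    rw [pow_succ, hzpow k, hz2]
    have hf : ((k.factorial:ℝ) * ((k+1).factorial:ℝ)) ≠ 0 := by positivity
    field_simp
  rw [h0, h1, ← Summable.tsum_add (summable_sq_fact _ hBs)
      (by simpa [mul_div_assoc] using ((summable_fact_fact (B*s) hBs).mul_left (a/2))),
    ← tsum_mul_left]

lemma wallis (k : ℕ) : ∫ x in (-1:ℝ)..1, (1 - x^2)^k
    = 2 * 4^k * ((k.factorial:ℝ))^2 / ((2*k+1).factorial) := by
  induction k with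
  | zero => simp; norm_num
  | succ k ih =>
    have key : ∀ x ∈ Set.uIcc (-1:ℝ) 1, HasDerivAt (fun y : ℝ => y * (1 - y^2)^(k+1))
        ((2*(k:ℝ)+3) * (1 - x^2)^(k+1) - (2*(k:ℝ)+2) * (1 - x^2)^k) x := by
      intro x _
      have h1 : HasDerivAt (fun y : ℝ => 1 - y^2) (-(2*x)) x := by
        simpa using ((hasDerivAt_pow 2 x).const_sub 1)
      have h2 := ((hasDerivAt_id x).mul (h1.pow (k+1)))
      refine h2.congr_deriv ?_
      simp only [id, Pi.pow_apply, Nat.add_sub_cancel]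
      push_cast
      ring
    have hcont : IntervalIntegrable (fun x : ℝ => (2*(k:ℝ)+3) * (1 - x^2)^(k+1) - (2*(k:ℝ)+2) * (1 - x^2)^k)
        MeasureTheory.volume (-1) 1 := by
      apply Continuous.intervalIntegrable; continuity
    have heq := intervalIntegral.integral_eq_sub_of_hasDerivAt key hcont
    rw [intervalIntegral.integral_sub, intervalIntegral.integral_const_mul,
        intervalIntegral.integral_const_mul, ih] at heq
    · have h3 : ((2*(k+1)+1).factorial : ℝ) = (2*(k:ℝ)+3) * ((2*(k:ℝ)+2) * ((2*k+1).factorial)) := by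
        have : 2*(k+1)+1 = (2*k+1) + 1 + 1 := by omega
        rw [this, Nat.factorial_succ, Nat.factorial_succ]
        push_cast; ring
      have hf : ((2*k+1).factorial : ℝ) ≠ 0 := by positivity
      have h4 : (2*(k:ℝ)+3) ≠ 0 := by positivity
      have hval : (1:ℝ) * (1 - 1^2)^(k+1) - (-1) * (1 - (-1:ℝ)^2)^(k+1) = 0 := by norm_num
      rw [hval] at heq
      have : (∫ x in (-1:ℝ)..1, (1 - x^2)^(k+1))
          = (2*(k:ℝ)+2) * (2 * 4 ^ k * (k.factorial:ℝ) ^ 2 / ((2*k+1).factorial)) / (2*(k:ℝ)+3) := by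
        field_simp at heq ⊢
        linarith
      have h5 : (((k+1).factorial : ℝ)) = ((k:ℝ)+1) * (k.factorial) := by
        rw [Nat.factorial_succ]; push_cast; ring
      rw [this, h3, h5]
      field_simp
      ring
    · apply Continuous.intervalIntegrable; continuity
    · apply Continuous.intervalIntegrable; continuity

lemma wallis_scaled {ρ : ℝ} (hρ : 0 < ρ) (k : ℕ) :
    ∫ x in Set.Ioo (-ρ) ρ, (ρ^2 - x^2)^k
      = ρ^(2*k+1) * (2 * 4^k * ((k.factorial:ℝ))^2 / ((2*k+1).factorial)) := by
  have h1 : ∫ x in Set.Ioo (-ρ) ρ, (ρ^2 - x^2)^k = ∫ x in (-ρ)..ρ, (ρ^2 - x^2)^k := by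
    rw [intervalIntegral.integral_of_le (by linarith), MeasureTheory.integral_Ioc_eq_integral_Ioo]
  have h2 := intervalIntegral.smul_integral_comp_mul_left (fun x => (ρ^2 - x^2)^k) ρ (a := -1) (b := 1)
  have h3 : (∫ x in (-1:ℝ)..1, (ρ^2 - (ρ*x)^2)^k) = ρ^(2*k) * ∫ x in (-1:ℝ)..1, (1 - x^2)^k := by
    rw [← intervalIntegral.integral_const_mul]
    congr 1; funext x
    rw [show ρ^2 - (ρ*x)^2 = ρ^2*(1-x^2) by ring, mul_pow, ← pow_mul, mul_comm 2 k]
  rw [h3] at h2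
  rw [show ρ * (-1) = -ρ by ring, mul_one] at h2
  rw [h1, ← h2, wallis k]
  rw [smul_eq_mul, pow_add, pow_one]
  ring

lemma integral_g (a ρ : ℝ) (ha : 0 < a) (hρ : 0 < ρ) (k : ℕ) :
    ∫ x in Set.Ioo (-ρ) ρ, (a * Real.exp (-a) / (2 * ρ)) *
        ( ((a/(2*ρ))^2 * (ρ^2 - x^2))^k / ((k.factorial:ℝ))^2
          + (a/2) * ((a/(2*ρ))^2 * (ρ^2 - x^2))^k / ((k.factorial:ℝ) * ((k+1).factorial:ℝ)) )
    = Real.exp (-a) * (a^(2*k+1) / (((2*k+1).factorial:ℝ)) + a^(2*k+2) / (((2*k+2).factorial:ℝ))) := by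
  have hwal : ∫ x in Set.Ioo (-ρ) ρ, (ρ^2 - x^2)^k
      = ρ^(2*k+1) * (2 * 4^k * ((k.factorial:ℝ))^2 / ((2*k+1).factorial)) := wallis_scaled hρ k
  set c1 : ℝ := (a * Real.exp (-a) / (2 * ρ)) * (((a/(2*ρ))^2)^k / ((k.factorial:ℝ))^2
      + (a/2) * ((a/(2*ρ))^2)^k / ((k.factorial:ℝ) * ((k+1).factorial:ℝ))) with hc1
  have hfun : (fun x : ℝ => (a * Real.exp (-a) / (2 * ρ)) *
        ( ((a/(2*ρ))^2 * (ρ^2 - x^2))^k / ((k.factorial:ℝ))^2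
          + (a/2) * ((a/(2*ρ))^2 * (ρ^2 - x^2))^k / ((k.factorial:ℝ) * ((k+1).factorial:ℝ)) ))
      = fun x : ℝ => c1 * (ρ^2 - x^2)^k := by
    funext x; rw [hc1, mul_pow]; ring
  rw [hfun, MeasureTheory.integral_const_mul, hwal, hc1]
  have hA : (((2*k+2).factorial:ℝ)) = (2*(k:ℝ)+2) * (((2*k+1).factorial:ℝ)) := by
    rw [show 2*k+2 = (2*k+1)+1 by omega, Nat.factorial_succ]; push_cast; ring
  have hB : (((k+1).factorial:ℝ)) = ((k:ℝ)+1) * ((k.factorial:ℝ)) := by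
    rw [Nat.factorial_succ]; push_cast; ring
  have hk1 : ((k.factorial:ℝ)) ≠ 0 := by positivity
  have hk2 : (((2*k+1).factorial:ℝ)) ≠ 0 := by positivity
  have h4 : (4:ℝ)^k = 2^(2*k) := by rw [pow_mul]; norm_num
  rw [hA, hB, h4]
  have hρk : (ρ:ℝ)^(2*k+1) = ρ^(2*k) * ρ := by ring
  field_simp
  simp only [div_pow, mul_pow, ← pow_mul]
  field_simp
  ring

theorem stationary_density_1d_normalized (a ρ : ℝ) (ha : 0 < a) (hρ : 0 < ρ) :
    Real.exp (-a) +
      (∫ x in Set.Ioo (-ρ) ρ,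
        (a * Real.exp (-a) / (2 * ρ)) *
          (besselI0 ((a / ρ) * Real.sqrt (ρ ^ 2 - x ^ 2)) +
            (ρ / Real.sqrt (ρ ^ 2 - x ^ 2)) *
              besselI1 ((a / ρ) * Real.sqrt (ρ ^ 2 - x ^ 2)))) = 1 := by
  set g : ℕ → ℝ → ℝ := fun k x => (a * Real.exp (-a) / (2 * ρ)) *
      ( ((a/(2*ρ))^2 * (ρ^2 - x^2))^k / ((k.factorial:ℝ))^2
        + (a/2) * ((a/(2*ρ))^2 * (ρ^2 - x^2))^k / ((k.factorial:ℝ) * ((k+1).factorial:ℝ)) ) with hg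
  have hstep1 : (∫ x in Set.Ioo (-ρ) ρ, (a * Real.exp (-a) / (2 * ρ)) *
      (besselI0 ((a / ρ) * Real.sqrt (ρ ^ 2 - x ^ 2)) +
        (ρ / Real.sqrt (ρ ^ 2 - x ^ 2)) * besselI1 ((a / ρ) * Real.sqrt (ρ ^ 2 - x ^ 2))))
      = ∫ x in Set.Ioo (-ρ) ρ, ∑' k, g k x :=
    setIntegral_congr_fun measurableSet_Ioo (fun x hx => pointwise_eq a ρ x ha hρ hx)
  have hcont : ∀ k, Continuous (g k) := fun k => by fun_prop
  have hint : ∀ k : ℕ, IntegrableOn (g k) (Set.Ioo (-ρ) ρ) := fun k =>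
    ((hcont k).integrableOn_Icc).mono_set Set.Ioo_subset_Icc_self
  have hnonneg : ∀ k, ∀ x ∈ Set.Ioo (-ρ) ρ, 0 ≤ g k x := by
    intro k x hx
    obtain ⟨h1, h2⟩ := hx
    have h3 : (0:ℝ) ≤ ρ^2 - x^2 := by nlinarith
    have he : 0 < Real.exp (-a) := Real.exp_pos _
    have hf1 : (0:ℝ) < (k.factorial:ℝ) := by positivity
    have hf2 : (0:ℝ) < ((k+1).factorial:ℝ) := by positivity
    rw [hg]
    positivity
  have hnorm : ∀ k : ℕ, (∫ x in Set.Ioo (-ρ) ρ, ‖g k x‖)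
      = Real.exp (-a) * (a^(2*k+1)/(((2*k+1).factorial:ℝ)) + a^(2*k+2)/(((2*k+2).factorial:ℝ))) := by
    intro k
    rw [setIntegral_congr_fun measurableSet_Ioo (fun x hx => Real.norm_of_nonneg (hnonneg k x hx))]
    exact integral_g a ρ ha hρ k
  have hs1 : Summable (fun k : ℕ => a^(2*k+1)/(((2*k+1).factorial:ℝ))) := by
    have hinj : Function.Injective (fun k : ℕ => 2*k+1) := fun m n h => by simp only [] at h; omega
    simpa [Function.comp_def] using (Real.summable_pow_div_factorial a).comp_injective hinj
  have hs2 : Summable (fun k : ℕ => a^(2*k+2)/(((2*k+2).factorial:ℝ))) := by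
    have hinj : Function.Injective (fun k : ℕ => 2*k+2) := fun m n h => by simp only [] at h; omega
    simpa [Function.comp_def] using (Real.summable_pow_div_factorial a).comp_injective hinj
  have hsum : Summable (fun k : ℕ => ∫ x in Set.Ioo (-ρ) ρ, ‖g k x‖) := by
    rw [funext hnorm]
    exact (hs1.add hs2).mul_left _
  have hswap := MeasureTheory.integral_tsum_of_summable_integral_norm hint hsum
  rw [hstep1, ← hswap, tsum_congr (fun k : ℕ => integral_g a ρ ha hρ k), tsum_mul_left,
    Summable.tsum_add hs1 hs2]
  have hf : Summable (fun n : ℕ => a^(n+1)/(((n+1).factorial:ℝ))) := by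
    have hinj : Function.Injective (fun n : ℕ => n+1) := fun m n h => by simp only [] at h; omega
    simpa [Function.comp_def] using (Real.summable_pow_div_factorial a).comp_injective hinj
  have hkey : (∑' k : ℕ, a^(2*k+1)/(((2*k+1).factorial:ℝ)))
      + ∑' k : ℕ, a^(2*k+2)/(((2*k+2).factorial:ℝ))
      = Real.exp a - 1 := by
    have hidx : ∀ k : ℕ, 2*k+1+1 = 2*k+2 := fun k => by omega
    have he := tsum_even_add_odd (f := fun n : ℕ => a^(n+1)/(((n+1).factorial:ℝ)))
      (by simpa using hs1) (by simpa [hidx] using hs2)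
    simp only [hidx] at he
    rw [he]
    have hexp : Real.exp a = ∑' n : ℕ, a^n / (n.factorial:ℝ) := by
      rw [Real.exp_eq_exp_ℝ, NormedSpace.exp_eq_tsum_div]
    have hz := Summable.tsum_eq_zero_add (f := fun n : ℕ => a^n / (n.factorial:ℝ))
      (Real.summable_pow_div_factorial a)
    rw [← hexp] at hz
    simp only [pow_zero, Nat.factorial_zero, Nat.cast_one, div_one] at hz
    linarith
  rw [hkey, Real.exp_neg]
  have hea := (Real.exp_pos a).ne'
  field_simp
  ring
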